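/- Let P be a compact convex subset of ℝ^n containing the origin in its interior, let d_P(p,q) = inf{λ ≥ 0 : q ∈ p + λ·P}, and let L be a full-rank lattice in ℝ^n (the set of integer linear combinations of some ℝ-basis of ℝ^n). If q ∈ L \ {0} is a shortest vector of L under d_P, i.e. d_P(0,q) ≤ d_P(0,q') for all q' ∈ L \ {0}, then the Voronoi cells V_P(0) and V_P(q) have a common point; that is, every shortest vector of L under d_P is a Voronoi neighbour of the origin. -/

import Mathlib

/-- The polyhedral distance function induced by a convex body `P` containing
the origin: `d_P(p,q) = inf {λ ≥ 0 : q ∈ p + λ • P}`. -/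
noncomputable def polyDist (n : ℕ) (P : Set (Fin n → ℝ)) (p q : Fin n → ℝ) : ℝ :=
  sInf {l : ℝ | 0 ≤ l ∧ ∃ y ∈ P, q = p + l • y}

lemma polyDist_eq_gauge (n : ℕ) (P : Set (Fin n → ℝ)) (h0 : (0 : Fin n → ℝ) ∈ P)
    (p q : Fin n → ℝ) : polyDist n P p q = gauge P (q - p) := by
  rcases eq_or_ne q p with rfl | hne
  · rw [sub_self, gauge_zero]
    have h0mem : (0 : ℝ) ∈ {l : ℝ | 0 ≤ l ∧ ∃ y ∈ P, q = q + l • y} :=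
      ⟨le_refl 0, 0, h0, by simp⟩
    exact le_antisymm (csInf_le ⟨0, fun x hx => hx.1⟩ h0mem)
      (le_csInf ⟨0, h0mem⟩ fun x hx => hx.1)
  · unfold polyDist gauge
    congr 1
    ext l
    constructor
    · rintro ⟨hl0, y, hy, rfl⟩
      have hl : 0 < l := by
        rcases hl0.lt_or_eq with h | h
        · exact h
        · exfalso; apply hne; simp [← h]
      exact ⟨hl, ⟨y, hy, by simp⟩⟩
    · rintro ⟨hl, y, hy, hxy⟩
      exact ⟨hl.le, y, hy, by rw [show l • y = q - p from hxy]; abel⟩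

/-- every shortest vector of a full-rank lattice under a polyhedral
distance function is a Voronoi neighbour of the origin. -/
theorem shortest_vector_is_voronoi_neighbour (n : ℕ) (P : Set (Fin n → ℝ))
    (hPcomp : IsCompact P) (hPconv : Convex ℝ P)
    (hP0 : (0 : Fin n → ℝ) ∈ interior P)
    (L : AddSubgroup (Fin n → ℝ))
    (hL : ∃ B : Module.Basis (Fin n) ℝ (Fin n → ℝ), L = AddSubgroup.closure (Set.range B))
    (q : Fin n → ℝ) (hqL : q ∈ L) (hq0 : q ≠ 0)
    (hshort : ∀ q' ∈ L, q' ≠ 0 → polyDist n P 0 q ≤ polyDist n P 0 q') :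
    ({p | ∀ s' ∈ L, polyDist n P p 0 ≤ polyDist n P p s'} ∩
      {p | ∀ s' ∈ L, polyDist n P p q ≤ polyDist n P p s'}).Nonempty := by
  have h0P : (0 : Fin n → ℝ) ∈ P := interior_subset hP0
  have habs : Absorbent ℝ P := absorbent_nhds_zero (mem_interior_iff_mem_nhds.mp hP0)
  have hbdd : Bornology.IsVonNBounded ℝ P := NormedSpace.isVonNBounded_of_isBounded ℝ hPcomp.isBounded
  have pdg := polyDist_eq_gauge n P h0P
  set a := gauge P q with ha
  set b := gauge P (-q) with hb
  have ha0 : 0 < a := (gauge_pos habs hbdd).mpr hq0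
  have hb0 : 0 < b := (gauge_pos habs hbdd).mpr (neg_ne_zero.mpr hq0)
  have hab : 0 < a + b := by linarith
  set t : ℝ := a / (a + b) with ht
  have ht0 : 0 ≤ t := div_nonneg ha0.le hab.le
  have ht1' : 1 - t = b / (a + b) := by
    rw [ht, eq_div_iff hab.ne', sub_mul, one_mul, div_mul_cancel₀ _ hab.ne']; ring
  have ht1 : 0 ≤ 1 - t := by rw [ht1']; positivity
  refine ⟨t • q, ?_, ?_⟩ <;> intro s' hs' <;> rw [pdg, pdg]
  · -- gauge (0 - t•q) ≤ gauge (s' - t•q)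
    have hval : gauge P (0 - t • q) = t * b := by
      rw [zero_sub, ← smul_neg, gauge_smul_of_nonneg ht0, smul_eq_mul, ← hb]
    rw [hval]
    rcases eq_or_ne s' 0 with rfl | hs0
    · rw [hval]
    · have h1 : a ≤ gauge P s' := by
        have := hshort s' hs' hs0
        rw [pdg, pdg] at this
        simpa using this
      have h2 : gauge P s' ≤ gauge P (s' - t • q) + gauge P (t • q) := by
        have := gauge_add_le hPconv habs (s' - t • q) (t • q)
        simpa using this
      have h3 : gauge P (t • q) = t * a := by
        rw [gauge_smul_of_nonneg ht0, smul_eq_mul, ← ha]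
      have key : t * b = (1 - t) * a := by
        rw [ht1', ht]; field_simp
      rw [key]
      nlinarith [gauge_nonneg (s := P) (s' - t • q)]
  · -- gauge (q - t•q) ≤ gauge (s' - t•q)
    have hval : gauge P (q - t • q) = (1 - t) * a := by
      have : q - t • q = (1 - t) • q := by rw [sub_smul, one_smul]
      rw [this, gauge_smul_of_nonneg ht1, smul_eq_mul, ← ha]
    rw [hval]
    rcases eq_or_ne s' 0 with rfl | hs0
    · have key : (1 - t) * a = t * b := by
        rw [ht1', ht]; field_simp
      rw [key, zero_sub, ← smul_neg, gauge_smul_of_nonneg ht0, smul_eq_mul, ← hb]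
    · have h1 : a ≤ gauge P s' := by
        have := hshort s' hs' hs0
        rw [pdg, pdg] at this
        simpa using this
      have h2 : gauge P s' ≤ gauge P (s' - t • q) + gauge P (t • q) := by
        have := gauge_add_le hPconv habs (s' - t • q) (t • q)
        simpa using this
      have h3 : gauge P (t • q) = t * a := by
        rw [gauge_smul_of_nonneg ht0, smul_eq_mul, ← ha]
      nlinarith [gauge_nonneg (s := P) (s' - t • q)]
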